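/- Let Σ be an alphabet equipped with a linear order, let # ∉ Σ be a fresh symbol, and let E be an equivalence relation on the set of ω-words over Σ. Then the following are equivalent: (i) there exists an infinite set of ultimately periodic ω-words over Σ any two distinct members of which are not E-equivalent; (ii) for every k there exist m, n > 0 such that the set L_#(E) ∩ {u#v : u ∈ Σⁿ, v ∈ Σᵐ} has more than k elements. -/

import Mathlib

/-- The ultimately periodic ω-word `u · v^ω`: position `i` is `u[i]` for `i < |u|`,
and `v[(i - |u|) mod |v|]` afterwards (intended for nonempty `v`). -/
def upWord {σ : Type*} [Inhabited σ] (u v : List σ) : ℕ → σ := fun i =>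
  if i < u.length then u.getD i default
  else v.getD ((i - u.length) % v.length) default

/-- An ω-word is ultimately periodic if it equals `u · v^ω` for some finite word `u`
and nonempty finite word `v`. -/
def UltimatelyPeriodic {σ : Type*} [Inhabited σ] (w : ℕ → σ) : Prop :=
  ∃ u v : List σ, v ≠ [] ∧ w = upWord u v

/-- The encoding `u#v` of a pair of finite words over `Σ` as a finite word over
`Σ ∪ {#}`, where the fresh symbol `#` is modelled by `none : Option σ`. -/
def enc {σ : Type*} (u v : List σ) : List (Option σ) :=
  u.map some ++ [none] ++ v.map some

/-- The relation `E_#` over finite words: pairs `(u#v, x#y)` with `v, y` nonempty,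
`|u| = |x|`, `|v| = |y|`, and `(u·v^ω, x·y^ω) ∈ E`. -/
def EHash {σ : Type*} [Inhabited σ] (E : Set ((ℕ → σ) × (ℕ → σ))) :
    Set (List (Option σ) × List (Option σ)) :=
  {p | ∃ u v x y : List σ, v ≠ [] ∧ y ≠ [] ∧ u.length = x.length ∧ v.length = y.length ∧
    p.1 = enc u v ∧ p.2 = enc x y ∧ (upWord u v, upWord x y) ∈ E}

/-- The set of representatives `L_#(E)`: words `u#v` such that no lexicographically
smaller word `x#y` is `E_#`-related to `u#v`.  Here `lt` is the (arbitrary) extension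
of the order on `Σ` to `Σ ∪ {#}`, and words are compared lexicographically. -/
def LHash {σ : Type*} [Inhabited σ] (lt : Option σ → Option σ → Prop)
    (E : Set ((ℕ → σ) × (ℕ → σ))) : Set (List (Option σ)) :=
  {w | (∃ u v : List σ, v ≠ [] ∧ w = enc u v) ∧
    ¬ ∃ w' : List (Option σ), List.Lex lt w' w ∧ (w', w) ∈ EHash E}

section Aux
variable {σ : Type*} [Inhabited σ]

lemma enc_length (u v : List σ) : (enc u v).length = u.length + 1 + v.length := by
  simp [enc]; omega

lemma enc_inj : ∀ (u v x y : List σ), enc u v = enc x y → u = x ∧ v = y := by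
  intro u
  induction u with
  | nil =>
    intro v x y h
    cases x with
    | nil =>
      simp only [enc, List.map_nil, List.nil_append, List.cons_append, List.cons.injEq,
        List.nil_append] at h
      exact ⟨rfl, List.map_injective_iff.mpr (Option.some_injective σ) h.2⟩
    | cons c x' =>
      simp [enc] at h
  | cons c u' ih =>
    intro v x y h
    cases x with
    | nil => simp [enc] at h
    | cons d x' =>
      simp only [enc, List.map_cons, List.cons_append, List.cons.injEq,
        Option.some.injEq] at h
      obtain ⟨hcd, ht⟩ := h
      have := ih v x' y (by simpa [enc] using ht)
      exact ⟨by rw [hcd, this.1], this.2⟩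

lemma getD_flatten_replicate (v : List σ) (d : σ) :
    ∀ (r t : ℕ), t < r * v.length →
      ((List.replicate r v).flatten).getD t d = v.getD (t % v.length) d := by
  intro r
  induction r with
  | zero => intro t ht; omega
  | succ r ih =>
    intro t ht
    rw [List.replicate_succ, List.flatten_cons]
    by_cases h : t < v.length
    · rw [List.getD_append _ _ _ _ h, Nat.mod_eq_of_lt h]
    · push_neg at h
      have hs : (r + 1) * v.length = r * v.length + v.length := by ring
      rw [List.getD_append_right _ _ _ _ h, ih _ (by omega)]
      congr 1
      conv_rhs => rw [show t = (t - v.length) + v.length by omega]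
      rw [Nat.add_mod_right]

lemma upWord_pow (u v : List σ) (hv : v ≠ []) (r : ℕ) (hr : 0 < r) :
    upWord u ((List.replicate r v).flatten) = upWord u v := by
  have hL : 0 < v.length := List.length_pos_iff.mpr hv
  have hlen : ((List.replicate r v).flatten).length = r * v.length := by
    simp [List.length_flatten, List.map_replicate, List.sum_replicate, smul_eq_mul, Nat.mul_comm]
  funext i
  unfold upWord
  by_cases h : i < u.length
  · simp [h]
  · simp only [h, if_false]
    rw [hlen, getD_flatten_replicate v default r _ (Nat.mod_lt _ (Nat.mul_pos hr hL)),
      Nat.mod_mod_of_dvd _ (dvd_mul_left _ _)]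

lemma getD_rotate (v : List σ) (d : σ) (n t : ℕ) (ht : t < v.length) :
    (v.rotate n).getD t d = v.getD ((t + n) % v.length) d := by
  rw [List.getD_eq_getElem _ _ (by simpa using ht), List.getElem_rotate,
    List.getD_eq_getElem _ _ (Nat.mod_lt _ (by omega))]

lemma upWord_shift (u v : List σ) (hv : v ≠ []) :
    upWord u v = upWord (u ++ [v.getD 0 default]) (v.rotate 1) := by
  have hL : 0 < v.length := List.length_pos_iff.mpr hv
  funext i
  unfold upWord
  simp only [List.length_append, List.length_singleton, List.length_rotate]
  rcases lt_trichotomy i u.length with h | h | h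
  · rw [if_pos h, if_pos (by omega), List.getD_append _ _ _ _ h]
  · subst h
    rw [if_neg (lt_irrefl _), if_pos (by omega),
      List.getD_append_right _ _ _ _ (le_refl _), Nat.sub_self, Nat.zero_mod]
    simp
  · rw [if_neg (by omega), if_neg (by omega)]
    have h1 : (i - (u.length + 1)) % v.length < v.length := Nat.mod_lt _ hL
    rw [getD_rotate _ _ _ _ h1, Nat.mod_add_mod]
    congr 2
    omega

lemma upWord_extend (u v : List σ) (hv : v ≠ []) (d : ℕ) :
    ∃ x y : List σ, y ≠ [] ∧ x.length = u.length + d ∧ y.length = v.length ∧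
      upWord u v = upWord x y := by
  induction d with
  | zero => exact ⟨u, v, hv, rfl, rfl, rfl⟩
  | succ d ih =>
    obtain ⟨x, y, hy, hx, hyl, he⟩ := ih
    refine ⟨x ++ [y.getD 0 default], y.rotate 1, ?_, ?_, ?_, ?_⟩
    · intro h
      exact hy (List.length_eq_zero_iff.mp (by simpa using congrArg List.length h))
    · simp [hx]; omega
    · simpa using hyl
    · rw [he, upWord_shift x y hy]

lemma upWord_uniform (u v : List σ) (hv : v ≠ []) {n m : ℕ} (hn : u.length ≤ n)
    (hm : v.length ∣ m) (hm0 : 0 < m) :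
    ∃ x y : List σ, y ≠ [] ∧ x.length = n ∧ y.length = m ∧ upWord u v = upWord x y := by
  obtain ⟨r, hr⟩ := hm
  have hL : 0 < v.length := List.length_pos_iff.mpr hv
  have hr0 : 0 < r := by
    rcases Nat.eq_zero_or_pos r with rfl | h
    · omega
    · exact h
  set v' := (List.replicate r v).flatten with hv'
  have hv'len : v'.length = m := by
    simp [hv', List.length_flatten, List.map_replicate, List.sum_replicate, smul_eq_mul, hr,
      Nat.mul_comm]
  have hv'ne : v' ≠ [] := by
    intro h
    rw [h] at hv'len
    simp at hv'len
    omega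
  obtain ⟨x, y, hy, hx, hyl, he2⟩ := upWord_extend u v' hv'ne (n - u.length)
  exact ⟨x, y, hy, by omega, by omega,
    by rw [← upWord_pow u v hv r hr0, ← hv', he2]⟩

lemma exists_min_rel {α : Type*} (r : α → α → Prop) (hirr : ∀ a, ¬ r a a)
    (htr : ∀ a b c, r a b → r b c → r a c) (s : Finset α) :
    s.Nonempty → ∃ a ∈ s, ∀ b ∈ s, ¬ r b a := by
  classical
  induction s using Finset.induction_on with
  | empty => rintro ⟨x, hx⟩; simp at hx
  | @insert x t hx ih =>
    intro _
    rcases t.eq_empty_or_nonempty with rfl | ht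
    · refine ⟨x, by simp, ?_⟩
      intro b hb
      simp only [LawfulSingleton.insert_empty_eq, Finset.mem_singleton] at hb
      subst hb
      exact hirr b
    · obtain ⟨a, ha, hmin⟩ := ih ht
      by_cases hxa : r x a
      · refine ⟨x, Finset.mem_insert_self _ _, ?_⟩
        intro b hb hbx
        rcases Finset.mem_insert.mp hb with rfl | hb'
        · exact hirr b hbx
        · exact hmin b hb' (htr _ _ _ hbx hxa)
      · refine ⟨a, Finset.mem_insert_of_mem ha, ?_⟩
        intro b hb hba
        rcases Finset.mem_insert.mp hb with rfl | hb'
        · exact hxa hba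
        · exact hmin b hb' hba

end Aux

/-- for an equivalence relation `E` on ω-words over a linearly ordered
alphabet `Σ`, there are infinitely many pairwise non-`E`-equivalent ultimately periodic
ω-words iff for every `k` there are `m, n > 0` such that
`L_#(E) ∩ {u#v : u ∈ Σⁿ, v ∈ Σᵐ}` has more than `k` elements. -/
theorem infinitely_many_classes_iff_LHash_large
    {σ : Type*} [Fintype σ] [Inhabited σ] [LinearOrder σ]
    (lt : Option σ → Option σ → Prop)
    (hlt : IsStrictTotalOrder (Option σ) lt)
    (hext : ∀ a b : σ, lt (some a) (some b) ↔ a < b)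
    (E : Set ((ℕ → σ) × (ℕ → σ)))
    (hE : Equivalence fun x y : ℕ → σ => (x, y) ∈ E) :
    (∃ S : Set (ℕ → σ), S.Infinite ∧ (∀ w ∈ S, UltimatelyPeriodic w) ∧
        ∀ w ∈ S, ∀ w' ∈ S, w ≠ w' → (w, w') ∉ E) ↔
    (∀ k : ℕ, ∃ m n : ℕ, 0 < m ∧ 0 < n ∧
      ∃ s : Finset (List (Option σ)),
        (∀ w ∈ s, w ∈ LHash lt E ∧
          ∃ u v : List σ, u.length = n ∧ v.length = m ∧ w = enc u v) ∧
        k < s.card) := by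
  classical
  haveI := hlt
  constructor
  · rintro ⟨S, hSinf, hSup, hSne⟩ k
    obtain ⟨t, htS, htc⟩ := hSinf.exists_subset_card_eq (k + 1)
    have key : ∀ w ∈ t, ∃ u v : List σ, v ≠ [] ∧ w = upWord u v := fun w hw =>
      hSup w (htS hw)
    choose! u v hv hw using key
    set m : ℕ := ∏ w ∈ t, (v w).length with hmdef
    have hm0 : 0 < m := Finset.prod_pos fun w hwt => List.length_pos_iff.mpr (hv w hwt)
    set n : ℕ := (t.sup fun w => (u w).length) + 1 with hndef
    have key2 : ∀ w ∈ t, ∃ x y : List σ, y ≠ [] ∧ x.length = n ∧ y.length = m ∧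
        w = upWord x y := by
      intro w hwt
      have hnle : (u w).length ≤ n := le_trans (Finset.le_sup (f := fun w => (u w).length) hwt) (Nat.le_succ _)
      have hdvd : (v w).length ∣ m := Finset.dvd_prod_of_mem (fun w => (v w).length) hwt
      obtain ⟨x, y, hy, hx, hyl, he⟩ := upWord_uniform (u w) (v w) (hv w hwt) hnle hdvd hm0
      exact ⟨x, y, hy, hx, hyl, (hw w hwt).trans he⟩
    choose! x y hy hx hyl hxy using key2
    have candFin : ∀ w : ℕ → σ, {z : List (Option σ) | ∃ a b : List σ,
        a.length = n ∧ b.length = m ∧ z = enc a b ∧ (upWord a b, w) ∈ E}.Finite := by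
      intro w
      apply (List.finite_length_eq (Option σ) (n + 1 + m)).subset
      rintro z ⟨a, b, ha, hb, rfl, -⟩
      simp only [Set.mem_setOf_eq, enc_length, ha, hb]
    have candNe : ∀ w ∈ t, ((candFin w).toFinset).Nonempty := by
      intro w hwt
      refine ⟨enc (x w) (y w), ?_⟩
      rw [Set.Finite.mem_toFinset]
      exact ⟨x w, y w, hx w hwt, hyl w hwt, rfl, by rw [← hxy w hwt]; exact hE.1 w⟩
    have key3 : ∀ w ∈ t, ∃ z, z ∈ (candFin w).toFinset ∧
        ∀ z' ∈ (candFin w).toFinset, ¬ List.Lex lt z' z := by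
      intro w hwt
      obtain ⟨z, hz1, hz2⟩ := exists_min_rel (List.Lex lt)
        (fun a => irrefl_of (List.Lex lt) a)
        (fun a b c h1 h2 => by
          haveI : IsStrictTotalOrder (List (Option σ)) (List.Lex lt) :=
            { isStrictWeakOrder_of_isOrderConnected with }
          exact trans_of (List.Lex lt) h1 h2) _ (candNe w hwt)
      exact ⟨z, hz1, hz2⟩
    choose! z hzmem hzmin using key3
    have key4 : ∀ w ∈ t, ∃ a b : List σ, a.length = n ∧ b.length = m ∧
        z w = enc a b ∧ (upWord a b, w) ∈ E := by
      intro w hwt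
      have := hzmem w hwt
      rwa [Set.Finite.mem_toFinset] at this
    choose! a b ha hb hz hab using key4
    have hbne : ∀ w ∈ t, b w ≠ [] := fun w hwt =>
      List.length_pos_iff.mp (by rw [hb w hwt]; exact hm0)
    have hLH : ∀ w ∈ t, z w ∈ LHash lt E := by
      intro w hwt
      refine ⟨⟨a w, b w, hbne w hwt, hz w hwt⟩, ?_⟩
      rintro ⟨w', hlex, p, q, p', q', hqne, hq'ne, hpl, hql, hw', hzw, hEpq⟩
      obtain ⟨hp'e, hq'e⟩ := enc_inj p' q' (a w) (b w) ((hzw.symm).trans (hz w hwt))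
      refine hzmin w hwt w' ?_ hlex
      rw [Set.Finite.mem_toFinset]
      refine ⟨p, q, ?_, ?_, hw', ?_⟩
      · rw [hpl, hp'e, ha w hwt]
      · rw [hql, hq'e, hb w hwt]
      · refine hE.3 ?_ (hab w hwt)
        rw [hp'e, hq'e] at hEpq
        exact hEpq
    refine ⟨m, n, hm0, by omega, t.image z, ?_, ?_⟩
    · intro zw hzw'
      obtain ⟨w, hwt, rfl⟩ := Finset.mem_image.mp hzw'
      exact ⟨hLH w hwt, a w, b w, ha w hwt, hb w hwt, hz w hwt⟩
    · rw [Finset.card_image_of_injOn, htc]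
      · omega
      · intro w1 hw1 w2 hw2 hzz
        rw [Finset.mem_coe] at hw1 hw2
        by_contra hne
        have h1 := hab w1 hw1
        have h2 := hab w2 hw2
        have henc : enc (a w1) (b w1) = enc (a w2) (b w2) := by
          rw [← hz w1 hw1, ← hz w2 hw2, hzz]
        obtain ⟨ea, eb⟩ := enc_inj _ _ _ _ henc
        have : (w1, w2) ∈ E := hE.3 (hE.2 h1) (by rw [ea, eb]; exact h2)
        exact hSne w1 (htS hw1) w2 (htS hw2) hne this
  · intro h
    set st : Setoid (ℕ → σ) := ⟨fun x y => (x, y) ∈ E, hE⟩ with hstdef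
    set T : Set (Quotient st) := {q | ∃ w, UltimatelyPeriodic w ∧ Quotient.mk st w = q}
      with hTdef
    by_cases hTinf : T.Infinite
    · have key : ∀ q ∈ T, ∃ w : ℕ → σ, UltimatelyPeriodic w ∧ Quotient.mk st w = q :=
        fun q hq => hq
      choose! f hfUP hfmk using key
      refine ⟨f '' T, hTinf.image ?_, ?_, ?_⟩
      · intro q1 h1 q2 h2 hf
        rw [← hfmk q1 h1, ← hfmk q2 h2, hf]
      · rintro w ⟨q, hq, rfl⟩
        exact hfUP q hq
      · rintro w ⟨q1, h1, rfl⟩ w' ⟨q2, h2, rfl⟩ hne hEww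
        apply hne
        have hq : Quotient.mk st (f q1) = Quotient.mk st (f q2) := Quotient.sound hEww
        rw [hfmk q1 h1, hfmk q2 h2] at hq
        rw [hq]
    · rw [Set.not_infinite] at hTinf
      obtain ⟨mm, nn, hm0, hn0, s, hsmem, hscard⟩ := h hTinf.toFinset.card
      have key : ∀ w ∈ s, ∃ uu vv : List σ, uu.length = nn ∧ vv.length = mm ∧
          w = enc uu vv := fun w hw => (hsmem w hw).2
      choose! aa bb haa hbb hws using key
      have hbne : ∀ w ∈ s, bb w ≠ [] := fun w hw =>
        List.length_pos_iff.mp (by rw [hbb w hw]; exact hm0)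
      have hgmem : ∀ w ∈ s, Quotient.mk st (upWord (aa w) (bb w)) ∈ hTinf.toFinset := by
        intro w hw
        rw [Set.Finite.mem_toFinset]
        exact ⟨upWord (aa w) (bb w), ⟨aa w, bb w, hbne w hw, rfl⟩, rfl⟩
      have hginj : Set.InjOn (fun w => Quotient.mk st (upWord (aa w) (bb w))) ↑s := by
        intro w1 h1 w2 h2 heq
        rw [Finset.mem_coe] at h1 h2
        by_contra hne
        have hE12 : (upWord (aa w1) (bb w1), upWord (aa w2) (bb w2)) ∈ E :=
          Quotient.exact heq
        rcases trichotomous_of (List.Lex lt) w1 w2 with hl | he | hl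
        · refine (hsmem w2 h2).1.2 ⟨w1, hl, aa w1, bb w1, aa w2, bb w2,
            hbne w1 h1, hbne w2 h2, ?_, ?_, hws w1 h1, hws w2 h2, hE12⟩
          · rw [haa w1 h1, haa w2 h2]
          · rw [hbb w1 h1, hbb w2 h2]
        · exact hne he
        · refine (hsmem w1 h1).1.2 ⟨w2, hl, aa w2, bb w2, aa w1, bb w1,
            hbne w2 h2, hbne w1 h1, ?_, ?_, hws w2 h2, hws w1 h1, hE.2 hE12⟩
          · rw [haa w1 h1, haa w2 h2]
          · rw [hbb w1 h1, hbb w2 h2]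
      have hle := Finset.card_le_card_of_injOn _ hgmem hginj
      omega
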